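/- If z is a unit of R, then for every m ≥ 1 the code R(1,m) has exactly 64^{m+1} elements; equivalently, the map (a₁,…,a_{m+1}) ↦ a₁g₁+⋯+a_{m+1}g_{m+1} from R^{m+1} to R^{2^m} is injective, where g₁,…,g_{m+1} are the rows of G_{1,m}. -/

import Mathlib

open Polynomial

noncomputable section

/-- The ring `R = ℤ₄[u]/(u³ − 1)`. -/
abbrev R : Type := Polynomial (ZMod 4) ⧸ Ideal.span ({Polynomial.X ^ 3 - 1} : Set (Polynomial (ZMod 4)))

/-- The image `u` of the variable in `R`. -/
def u : R := Ideal.Quotient.mk _ Polynomial.X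

instance : DecidableEq R := Classical.decEq R

lemma u_pow_three : u ^ 3 = 1 := by
  have h : (Ideal.Quotient.mk (Ideal.span ({Polynomial.X ^ 3 - 1} : Set (Polynomial (ZMod 4))))
      (Polynomial.X ^ 3 - 1) : R) = 0 :=
    Ideal.Quotient.eq_zero_iff_mem.mpr (Ideal.subset_span rfl)
  have h2 : (u ^ 3 - 1 : R) = 0 := by
    simpa [u, map_sub, map_pow] using h
  linear_combination h2

/-- The ring automorphism `σ` of `R` determined by `σ(u) = u²`. -/
def sigmaR : R →+* R :=
  Ideal.Quotient.lift _ (Polynomial.aeval (u ^ 2)).toRingHom (by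
    intro p hp
    obtain ⟨q, rfl⟩ := Ideal.mem_span_singleton.mp hp
    have h6 : ((u ^ 2) ^ 3 : R) = 1 := by
      rw [← pow_mul]
      have : (u : R) ^ (2 * 3) = (u ^ 3) ^ 2 := by ring
      rw [this, u_pow_three, one_pow]
    simp [map_mul, map_sub, map_pow, h6])

/-- The element `δ = 2 + 2u + 2u²` of `R`. -/
def δR : R := 2 + 2 * u + 2 * u ^ 2

/-- The map `ρ : Rⁿ → Rⁿ`, reversing coordinates and applying `σ` coordinatewise. -/
def ρmap (n : ℕ) (x : Fin n → R) : Fin n → R := fun i => sigmaR (x (Fin.rev i))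

/-- The 4-letter DNA alphabet. -/
inductive DNA : Type
  | A | C | G | T
deriving DecidableEq, Inhabited, Repr

/-- Watson–Crick complement of a DNA nucleotide. -/
def DNA.compl : DNA → DNA
  | .A => .T
  | .T => .A
  | .C => .G
  | .G => .C

/-- Complement of a DNA string. -/
def complStr (s : List DNA) : List DNA := s.map DNA.compl

/-- Reverse of a DNA string. -/
def revStr (s : List DNA) : List DNA := s.reverse

/-- Reverse-complement of a DNA string. -/
def rcStr (s : List DNA) : List DNA := s.reverse.map DNA.compl

/-- Hamming distance between two DNA strings (of equal length). -/
def dH (s t : List DNA) : ℕ := ((s.zip t).filter fun p => p.1 ≠ p.2).length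

/-- GC-content of a DNA string: the number of positions carrying `G` or `C`. -/
def gcContent (s : List DNA) : ℕ := (s.filter fun d => d = DNA.G ∨ d = DNA.C).length

/-- A DNA string has no homopolymer run of length greater than `2` iff it has no three
consecutive equal symbols. -/
def NoHomopolymer3 (s : List DNA) : Prop := ¬ ∃ (l r : List DNA) (a : DNA), s = l ++ [a, a, a] ++ r

/-- Blockwise extension of a map `ψ : R → Σ³` to vectors over `R`, by concatenation. -/
def Ψ (ψ : R → List DNA) {n : ℕ} (x : Fin n → R) : List DNA := (List.ofFn x).flatMap ψ

/-- The map `ψ₂` from the ideal `2R` to DNA strings of length `3`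
(the restriction of the DNA map of Table I to `2R`; its value outside `2R` is irrelevant). -/
def ψ₂ (x : R) : List DNA :=
  if x = 0 then [.G, .A, .G]
  else if x = 2 then [.C, .G, .A]
  else if x = 2 * u then [.G, .T, .G]
  else if x = 2 * u ^ 2 then [.A, .G, .C]
  else if x = 2 + 2 * u then [.T, .C, .G]
  else if x = 2 + 2 * u ^ 2 then [.C, .A, .C]
  else if x = 2 * u + 2 * u ^ 2 then [.G, .C, .T]
  else [.C, .T, .C]

/-- The rows of the Reed–Muller type generator matrix `G_{1,m}` over `R` (with parameter `z`):
`Gmat z m i j` is the entry of `G_{1,m}` in row `i` and column `j`.  Here `G_{1,0} = [z]` and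
`G_{1,m+1} = [[G_{1,m}, G_{1,m}], [0 … 0, z … z]]`, which for `m = 1` gives
`G_{1,1} = [[z,z],[0,z]]`. -/
def Gmat (z : R) : (m : ℕ) → Fin (m + 1) → Fin (2 ^ m) → R
  | 0, _, _ => z
  | m + 1, i, j =>
    if hi : (i : ℕ) < m + 1 then
      Gmat z m ⟨i, hi⟩ ⟨(j : ℕ) % 2 ^ m, Nat.mod_lt _ (Nat.two_pow_pos m)⟩
    else if (j : ℕ) < 2 ^ m then 0 else z

/-- The Reed–Muller type code `R(1,m)`: the `R`-submodule of `R^{2^m}` generated by the rows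
of `G_{1,m}`. -/
def RM (z : R) (m : ℕ) : Submodule R (Fin (2 ^ m) → R) := Submodule.span R (Set.range (Gmat z m))

/-- Hamming weight of a vector over `R`. -/
def wt {N : ℕ} (c : Fin N → R) : ℕ := (Finset.univ.filter fun j => c j ≠ 0).card

/-- Hamming distance between two vectors over `R`. -/
def hdistR {N : ℕ} (c c' : Fin N → R) : ℕ := (Finset.univ.filter fun j => c j ≠ c' j).card

/-- Coordinate reversal of a vector over `R`. -/
def revVec {N : ℕ} (c : Fin N → R) : Fin N → R := fun j => c (Fin.rev j)

/-- `a + bu + cu²` as an element of `R`, for `a, b, c ∈ ℤ₄`. -/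
def toR (a b c : ZMod 4) : R :=
  algebraMap (ZMod 4) R a + algebraMap (ZMod 4) R b * u + algebraMap (ZMod 4) R c * u ^ 2

end

lemma card_R : Nat.card R = 64 := by
  have hmonic : (Polynomial.X ^ 3 - Polynomial.C (1 : ZMod 4)).Monic :=
    Polynomial.monic_X_pow_sub_C 1 (by norm_num)
  have hC : (Polynomial.X ^ 3 - Polynomial.C (1 : ZMod 4)) = Polynomial.X ^ 3 - 1 := by simp
  rw [hC] at hmonic
  let pb : PowerBasis (ZMod 4) (AdjoinRoot (Polynomial.X ^ 3 - 1 : Polynomial (ZMod 4))) :=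
    AdjoinRoot.powerBasis' hmonic
  have hdim : pb.dim = 3 := by
    show (Polynomial.X ^ 3 - 1 : Polynomial (ZMod 4)).natDegree = 3
    compute_degree!
  have h1 : Nat.card R = Nat.card (Fin pb.dim → ZMod 4) :=
    Nat.card_congr pb.basis.equivFun.toEquiv
  rw [h1, hdim]
  simp [Nat.card_fun, Nat.card_eq_fintype_card]

lemma Gmat_left (z : R) (n : ℕ) (i : Fin (n + 1)) (j : Fin (2 ^ n)) (j' : Fin (2 ^ (n + 1)))
    (hjj : (j' : ℕ) % 2 ^ n = (j : ℕ)) :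
    Gmat z (n + 1) i.castSucc j' = Gmat z n i j := by
  have hi : ((i.castSucc : Fin (n + 2)) : ℕ) < n + 1 := i.isLt
  simp only [Gmat, dif_pos hi]
  congr 1 <;> apply Fin.ext <;> simp [hjj]

lemma Gmat_last (z : R) (n : ℕ) (j' : Fin (2 ^ (n + 1))) :
    Gmat z (n + 1) (Fin.last (n + 1)) j' = if (j' : ℕ) < 2 ^ n then 0 else z := by
  simp only [Gmat, Fin.val_last, lt_irrefl, dif_neg (lt_irrefl (n + 1)).elim]
  simp

lemma sum_eq_zero (z : R) (hz : IsUnit z) :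
    ∀ m (a : Fin (m + 1) → R), ∑ i, a i • Gmat z m i = 0 → a = 0 := by
  intro m
  induction m with
  | zero =>
    intro a h
    have h0 := congrFun h 0
    simp only [Finset.sum_apply, Fin.sum_univ_succ, Finset.univ_eq_empty, Finset.sum_empty,
      Pi.smul_apply, smul_eq_mul, Pi.zero_apply, Gmat, add_zero] at h0
    funext i
    fin_cases i
    exact (hz.mul_left_eq_zero).mp h0
  | succ n ih =>
    intro a h
    have hle : (2 : ℕ) ^ n < 2 ^ (n + 1) := Nat.pow_lt_pow_succ (by norm_num)
    have hball : (fun i : Fin (n + 1) => a i.castSucc) = 0 := by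
      apply ih
      funext j
      have hj2 : (j : ℕ) < 2 ^ (n + 1) := lt_trans j.isLt hle
      have hthis := congrFun h ⟨(j : ℕ), hj2⟩
      rw [Finset.sum_apply, Fin.sum_univ_castSucc] at hthis
      simp only [Pi.smul_apply, smul_eq_mul, Pi.zero_apply] at hthis
      rw [Gmat_last] at hthis
      rw [if_pos (show ((⟨(j : ℕ), hj2⟩ : Fin (2 ^ (n+1))) : ℕ) < 2 ^ n from j.isLt)] at hthis
      have hrw : ∀ i : Fin (n + 1),
          Gmat z (n + 1) i.castSucc ⟨(j : ℕ), hj2⟩ = Gmat z n i j := fun i =>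
        Gmat_left z n i j _ (by simp [Nat.mod_eq_of_lt j.isLt])
      simp only [hrw, mul_zero, add_zero] at hthis
      simpa [Finset.sum_apply] using hthis
    have hlast : a (Fin.last (n + 1)) = 0 := by
      have hthis := congrFun h ⟨2 ^ n, hle⟩
      rw [Finset.sum_apply, Fin.sum_univ_castSucc] at hthis
      simp only [Pi.smul_apply, smul_eq_mul, Pi.zero_apply] at hthis
      rw [Gmat_last, if_neg (lt_irrefl (2 ^ n))] at hthis
      have hz0 : ∀ i : Fin (n + 1), a i.castSucc = 0 := fun i => congrFun hball i
      simp only [hz0, zero_mul, Finset.sum_const_zero, zero_add] at hthis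
      exact (hz.mul_left_eq_zero).mp hthis
    funext i
    cases i using Fin.lastCases with
    | last => exact hlast
    | cast i => exact congrFun hball i

/-- If `z` is a unit of `R`, then for every `m ≥ 1` the code `R(1,m)` has exactly `64^{m+1}`
elements; equivalently, the linear-combination map `R^{m+1} → R^{2^m}` determined by the rows
of `G_{1,m}` is injective. -/
theorem stmt13 (z : R) (hz : IsUnit z) (m : ℕ) (hm : 1 ≤ m) :
    Nat.card (RM z m) = 64 ^ (m + 1) ∧
    Function.Injective (fun a : Fin (m + 1) → R => ∑ i : Fin (m + 1), a i • Gmat z m i) := by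
  set L := Fintype.linearCombination R (Gmat z m) with hL
  have hLapp : ∀ a : Fin (m + 1) → R, L a = ∑ i, a i • Gmat z m i := by
    intro a; simp [hL, Fintype.linearCombination_apply]
  have hinjL : Function.Injective L := by
    rw [← LinearMap.ker_eq_bot, LinearMap.ker_eq_bot']
    intro a ha
    exact sum_eq_zero z hz m a (by rw [← hLapp]; exact ha)
  constructor
  · have hrange : RM z m = LinearMap.range L := (Fintype.range_linearCombination R _).symm
    rw [hrange]
    have hset : ((LinearMap.range L : Submodule R (Fin (2 ^ m) → R)) : Set (Fin (2 ^ m) → R))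
        = Set.range ⇑L := LinearMap.coe_range L
    have h2 : Nat.card (LinearMap.range L) = Nat.card (Fin (m + 1) → R) := by
      rw [show Nat.card (LinearMap.range L) = Nat.card (Set.range ⇑L) by rw [← hset]; rfl]
      exact Nat.card_range_of_injective hinjL
    rw [h2, Nat.card_pi]
    simp [card_R]
  · intro a b hab
    apply hinjL
    rw [hLapp, hLapp]
    exact hab
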